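/- arXiv:1306.1803 — 2 statements merged into one kernel-verified Lean document; each statement's English description precedes it below -/
import Mathlib

section
/- Let G be a simple graph with maximum degree Δ(G) ≤ r and let T be a tight clique of G with |T| ≥ 2. Suppose R_T contains a connected component that is a single edge on vertices u and v. Let G' be the graph obtained from G by adding the edge uv and deleting all edges joining {u, v} to V(G) \ (T ∪ S_T). Then Δ(G') ≤ r and k(G') > k(G). -/
open Classical Finset

namespace Paper

variable {V : Type*}

/-- The number of cliques (vertex sets inducing complete subgraphs, including
the empty set and singletons) of a graph. -/
noncomputable def cliqueCount [Fintype V] (G : SimpleGraph V) : ℕ :=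
  (Finset.univ.filter fun s : Finset V => G.IsClique (s : Set V)).card

/-- The number of cliques of size `t`. -/
noncomputable def cliqueCountSize [Fintype V] (G : SimpleGraph V) (t : ℕ) : ℕ :=
  (Finset.univ.filter fun s : Finset V => G.IsClique (s : Set V) ∧ s.card = t).card

/-- A finset of vertices is independent if its vertices are pairwise nonadjacent. -/
def IsIndepFinset (G : SimpleGraph V) (s : Finset V) : Prop :=
  (s : Set V).Pairwise fun u v => ¬ G.Adj u v

/-- The number of independent sets (including the empty set) of a graph. -/
noncomputable def indepCount [Fintype V] (G : SimpleGraph V) : ℕ :=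
  (Finset.univ.filter fun s : Finset V => IsIndepFinset G s).card

/-- The number of independent sets of size `t`. -/
noncomputable def indepCountSize [Fintype V] (G : SimpleGraph V) (t : ℕ) : ℕ :=
  (Finset.univ.filter fun s : Finset V => IsIndepFinset G s ∧ s.card = t).card

/-- `S_T`: the set of common neighbors of all vertices of `T`. -/
noncomputable def commonNbrs [Fintype V] (G : SimpleGraph V) (T : Finset V) : Finset V :=
  Finset.univ.filter fun v => ∀ x ∈ T, G.Adj x v

/-- The weight `w(C)` of a clique: the number of common neighbors of its vertices. -/
noncomputable def weight [Fintype V] (G : SimpleGraph V) (T : Finset V) : ℕ :=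
  (commonNbrs G T).card

/-- A clique `T` is tight (for max degree bound `r`) if `w(T) = r + 1 - |T|`. -/
def IsTight [Fintype V] (r : ℕ) (G : SimpleGraph V) (T : Finset V) : Prop :=
  G.IsClique (T : Set V) ∧ weight G T + T.card = r + 1

/-- A cluster is a maximal tight clique. -/
def IsCluster [Fintype V] (r : ℕ) (G : SimpleGraph V) (T : Finset V) : Prop :=
  IsTight r G T ∧ ∀ T' : Finset V, T ⊆ T' → IsTight r G T' → T' = T

/-- The graph `G_T`, obtained from `G` by adding all edges within `S_T` and deleting all
edges between `S_T` and `V(G) \ (T ∪ S_T)`. -/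
noncomputable def modGraph [Fintype V] (G : SimpleGraph V) (T : Finset V) : SimpleGraph V :=
  SimpleGraph.fromRel fun u v =>
    (u ∈ commonNbrs G T ∧ v ∈ commonNbrs G T) ∨
    (G.Adj u v ∧ ¬(u ∈ commonNbrs G T ∧ v ∉ T ∪ commonNbrs G T) ∧
      ¬(v ∈ commonNbrs G T ∧ u ∉ T ∪ commonNbrs G T))

/-- The graph `R_T`: the complement of the subgraph of `G` induced on `S_T`. -/
noncomputable def RT [Fintype V] (G : SimpleGraph V) (T : Finset V) :
    SimpleGraph ((commonNbrs G T : Finset V) : Set V) :=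
  (SimpleGraph.induce ((commonNbrs G T : Finset V) : Set V) G)ᶜ

/-- `δ_I`: the minimum degree in `R` over the vertices of `I`. -/
noncomputable def minDegOn {W : Type*} [Fintype W] (R : SimpleGraph W) (I : Finset W) : ℕ :=
  sInf ((fun x => R.degree x) '' (I : Set W))

/-- The fixed loss `φ(R) = Σ_{∅ ≠ I independent} (2 ^ δ_I - 1)`. -/
noncomputable def fixedLoss {W : Type*} [Fintype W] (R : SimpleGraph W) : ℕ :=
  ∑ I ∈ Finset.univ.filter (fun I : Finset W => I.Nonempty ∧ IsIndepFinset R I),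
    (2 ^ minDegOn R I - 1)

/-- The disjoint union of `a` copies of `K_{r+1}` together with one copy of `K_b`. -/
noncomputable def kUnion (a r b : ℕ) : SimpleGraph ((Fin a × Fin (r + 1)) ⊕ Fin b) :=
  SimpleGraph.fromRel fun x y =>
    match x, y with
    | Sum.inl (i, _), Sum.inl (j, _) => i = j
    | Sum.inr _, Sum.inr _ => True
    | _, _ => False

/-- The disjoint union of `a` copies of `K_3` together with one copy of the cycle `C_m`. -/
noncomputable def triCyc (a m : ℕ) : SimpleGraph ((Fin a × Fin 3) ⊕ Fin m) :=
  SimpleGraph.fromRel fun x y =>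
    match x, y with
    | Sum.inl (i, _), Sum.inl (j, _) => i = j
    | Sum.inr u, Sum.inr v => (u.val + 1) % m = v.val
    | _, _ => False

end Paper

open Paper


lemma lost_bound {V : Type*} [Fintype V] (G G' : SimpleGraph V) (T S SS : Finset V)
    (u v : V) (huv : u ≠ v) (hnadj : ¬ G.Adj u v) (huS : u ∈ S)
    (hadj' : ∀ x y, G'.Adj x y ↔ x ≠ y ∧ ((x = u ∧ y = v) ∨ (x = v ∧ y = u) ∨
      (G.Adj x y ∧ ((x = u ∨ x = v) → y ∈ T ∪ S) ∧ ((y = u ∨ y = v) → x ∈ T ∪ S))))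
    (hTnbr : ∀ t ∈ T, ∀ x, G.Adj t x → x ∈ T ∪ S)
    (hUniq : ∀ x y, G.Adj u x → G.Adj u y → x ∉ T ∪ S → y ∉ T ∪ S → x = y)
    (hSS : ∀ w ∈ S, w ≠ u → w ≠ v → w ∈ SS) :
    ((univ.filter fun L : Finset V =>
        (G.IsClique (L : Set V) ∧ ¬ G'.IsClique (L : Set V)) ∧ u ∈ L)).card
      ≤ ((univ.filter fun C : Finset V => G.IsClique (C : Set V) ∧ C ⊆ SS)).card := by
  have hstruct : ∀ L : Finset V, G.IsClique (L : Set V) → ¬ G'.IsClique (L : Set V) → u ∈ L →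
      ∃ z ∈ L, z ∉ T ∪ S ∧ G.Adj u z ∧ ∀ w ∈ L, w = u ∨ w = z ∨ w ∈ SS := by
    intro L hclq hnclq huL
    have hvL : v ∉ L := fun hvL =>
      hnadj (hclq (Finset.mem_coe.mpr huL) (Finset.mem_coe.mpr hvL) huv)
    rw [SimpleGraph.isClique_iff, Set.Pairwise] at hnclq
    push_neg at hnclq
    obtain ⟨x, hx, y, hy, hxy, hnadj'⟩ := hnclq
    have hxL : x ∈ L := Finset.mem_coe.mp hx
    have hyL : y ∈ L := Finset.mem_coe.mp hy
    have hGxy : G.Adj x y := hclq hx hy hxy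
    rw [hadj'] at hnadj'
    have hbad : ((x = u ∨ x = v) ∧ y ∉ T ∪ S) ∨ ((y = u ∨ y = v) ∧ x ∉ T ∪ S) := by
      by_contra hcon
      push_neg at hcon
      exact hnadj' ⟨hxy, Or.inr (Or.inr ⟨hGxy, fun h => hcon.1 h, fun h => hcon.2 h⟩)⟩
    -- produce z
    obtain ⟨z, hzL, hzTS, hzadj⟩ :
        ∃ z, z ∈ L ∧ z ∉ T ∪ S ∧ G.Adj u z := by
      rcases hbad with ⟨hxuv, hyTS⟩ | ⟨hyuv, hxTS⟩
      · have hxu : x = u := by rcases hxuv with h | h; exact h; exact absurd (h ▸ hxL) hvL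
        exact ⟨y, hyL, hyTS, hxu ▸ hGxy⟩
      · have hyu : y = u := by rcases hyuv with h | h; exact h; exact absurd (h ▸ hyL) hvL
        exact ⟨x, hxL, hxTS, hyu ▸ hGxy.symm⟩
    refine ⟨z, hzL, hzTS, hzadj, ?_⟩
    intro w hwL
    by_cases hwu : w = u
    · exact Or.inl hwu
    by_cases hwz : w = z
    · exact Or.inr (Or.inl hwz)
    have hAdjuw : G.Adj u w := hclq (Finset.mem_coe.mpr huL) (Finset.mem_coe.mpr hwL)
      (fun h => hwu h.symm)
    have hAdjwz : G.Adj w z := hclq (Finset.mem_coe.mpr hwL) (Finset.mem_coe.mpr hzL) hwz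
    have hwTS : w ∈ T ∪ S := by
      by_contra hwTS
      exact hwz (hUniq w z hAdjuw hzadj hwTS hzTS)
    have hwS : w ∈ S := by
      rcases Finset.mem_union.mp hwTS with hwT | hwS
      · exact absurd (hTnbr w hwT z hAdjwz) hzTS
      · exact hwS
    have hwv : w ≠ v := fun h => hvL (h ▸ hwL)
    exact Or.inr (Or.inr (hSS w hwS hwu hwv))
  apply Finset.card_le_card_of_injOn (fun L => L ∩ SS)
  · intro L hL
    simp only [Finset.mem_coe, Finset.mem_filter, Finset.mem_univ, true_and] at hL ⊢
    exact ⟨hL.1.1.subset (by exact_mod_cast Finset.inter_subset_left), Finset.inter_subset_right⟩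
  · intro L1 h1 L2 h2 heq
    simp only [Finset.coe_filter, Finset.mem_univ, true_and, Set.mem_setOf_eq] at h1 h2
    simp only at heq
    have hsub : ∀ L1' L2' : Finset V,
        ((G.IsClique (L1' : Set V) ∧ ¬ G'.IsClique (L1' : Set V)) ∧ u ∈ L1') →
        ((G.IsClique (L2' : Set V) ∧ ¬ G'.IsClique (L2' : Set V)) ∧ u ∈ L2') →
        L1' ∩ SS = L2' ∩ SS → L1' ⊆ L2' := by
      intro L1' L2' h1 h2 heq
      obtain ⟨z1, hz1L, hz1TS, hz1adj, htri1⟩ := hstruct L1' h1.1.1 h1.1.2 h1.2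
      obtain ⟨z2, hz2L, hz2TS, hz2adj, _⟩ := hstruct L2' h2.1.1 h2.1.2 h2.2
      have hz12 : z1 = z2 := hUniq z1 z2 hz1adj hz2adj hz1TS hz2TS
      intro w hw
      rcases htri1 w hw with rfl | rfl | hwSS
      · exact h2.2
      · exact hz12 ▸ hz2L
      · have : w ∈ L2' ∩ SS := heq ▸ (Finset.mem_inter.mpr ⟨hw, hwSS⟩)
        exact (Finset.mem_inter.mp this).1
    exact Finset.Subset.antisymm (hsub L1 L2 h1 h2 heq) (hsub L2 L1 h2 h1 heq.symm)


/-- **Lemma 4.6.** Suppose `Δ(G) ≤ r`, `T` is a tight clique with `|T| ≥ 2`, and `R_T` has a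
`K_2` component on vertices `u, v` (i.e. `u, v ∈ S_T` are distinct and nonadjacent in `G`,
and every other vertex of `S_T` is adjacent in `G` to both `u` and `v`).  Then the graph `G'`
obtained from `G` by adding the edge `uv` and deleting all edges joining `{u, v}` to
`V(G) \ (T ∪ S_T)` satisfies `Δ(G') ≤ r` and `k(G') > k(G)`. -/
theorem stmt13 {V : Type*} [Fintype V] (r : ℕ) (G : SimpleGraph V) (hdeg : G.maxDegree ≤ r)
    (T : Finset V) (hT : IsTight r G T) (hT2 : 2 ≤ T.card)
    (u v : V) (hu : u ∈ commonNbrs G T) (hv : v ∈ commonNbrs G T) (huv : u ≠ v)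
    (hnadj : ¬ G.Adj u v)
    (hK2 : ∀ w ∈ commonNbrs G T, w ≠ u → w ≠ v → G.Adj u w ∧ G.Adj v w)
    (G' : SimpleGraph V)
    (hG' : G' = SimpleGraph.fromRel fun x y =>
      (x = u ∧ y = v) ∨
      (G.Adj x y ∧ ¬(x ∈ ({u, v} : Finset V) ∧ y ∉ T ∪ commonNbrs G T) ∧
        ¬(y ∈ ({u, v} : Finset V) ∧ x ∉ T ∪ commonNbrs G T))) :
    G'.maxDegree ≤ r ∧ cliqueCount G < cliqueCount G' := by
  set S := commonNbrs G T with hSdefn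
  have hSdef : ∀ s, s ∈ S ↔ ∀ x ∈ T, G.Adj x s := by
    intro s; simp [hSdefn, commonNbrs]
  have hF3 : ∀ t ∈ T, ∀ s ∈ S, G.Adj t s := fun t ht s hs => (hSdef s).mp hs t ht
  have hTSdisj : Disjoint T S := by
    rw [Finset.disjoint_left]
    intro t ht hts
    exact G.irrefl (hF3 t ht t hts)
  have huT : u ∉ T := fun h => Finset.disjoint_left.mp hTSdisj h hu
  have hvT : v ∉ T := fun h => Finset.disjoint_left.mp hTSdisj h hv
  have hcardTS : S.card + T.card = r + 1 := hT.2
  have hclqT : G.IsClique (T : Set V) := hT.1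
  have hcardU : (T ∪ S).card = r + 1 := by
    rw [Finset.card_union_of_disjoint hTSdisj]; omega
  -- every neighbor of a vertex of T lies in T ∪ S
  have hTnbr : ∀ t ∈ T, ∀ x, G.Adj t x → x ∈ T ∪ S := by
    intro t ht x hadjx
    by_contra hx
    have hsub : (T.erase t) ∪ S ∪ {x} ⊆ G.neighborFinset t := by
      intro y hy
      rw [SimpleGraph.mem_neighborFinset]
      rcases Finset.mem_union.mp hy with hy' | hy'
      · rcases Finset.mem_union.mp hy' with hy'' | hy''
        · obtain ⟨hyt, hyT⟩ := Finset.mem_erase.mp hy''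
          exact hclqT (Finset.mem_coe.mpr ht) (Finset.mem_coe.mpr hyT) (fun h => hyt h.symm)
        · exact hF3 t ht y hy''
      · rw [Finset.mem_singleton.mp hy']; exact hadjx
    have hxT : x ∉ T := fun h => hx (Finset.mem_union_left _ h)
    have hxS : x ∉ S := fun h => hx (Finset.mem_union_right _ h)
    have hd1 : Disjoint (T.erase t) S := Finset.disjoint_of_subset_left (Finset.erase_subset _ _) hTSdisj
    have hd2 : Disjoint ((T.erase t) ∪ S) ({x} : Finset V) := by
      simp only [Finset.disjoint_singleton_right, Finset.mem_union]
      rintro (h | h)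
      · exact hxT (Finset.mem_of_mem_erase h)
      · exact hxS h
    have hcard : ((T.erase t) ∪ S ∪ {x}).card = (T.card - 1) + S.card + 1 := by
      rw [Finset.card_union_of_disjoint hd2, Finset.card_union_of_disjoint hd1,
        Finset.card_erase_of_mem ht, Finset.card_singleton]
    have hle : ((T.erase t) ∪ S ∪ {x}).card ≤ G.degree t := by
      rw [SimpleGraph.degree]; exact Finset.card_le_card hsub
    have := G.degree_le_maxDegree t
    omega
  -- u and v are adjacent to every vertex of T ∪ S other than u, v
  have huAdj : ∀ w ∈ T ∪ S, w ≠ u → w ≠ v → G.Adj u w := by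
    intro w hw hwu hwv
    rcases Finset.mem_union.mp hw with hw' | hw'
    · exact (hF3 w hw' u hu).symm
    · exact (hK2 w hw' hwu hwv).1
  have hvAdj : ∀ w ∈ T ∪ S, w ≠ u → w ≠ v → G.Adj v w := by
    intro w hw hwu hwv
    rcases Finset.mem_union.mp hw with hw' | hw'
    · exact (hF3 w hw' v hv).symm
    · exact (hK2 w hw' hwu hwv).2
  -- uniqueness of outside neighbors
  have hUniqGen : ∀ a b : V, a ∈ S → b ∈ S → a ≠ b → ¬ G.Adj a b →
      (∀ w ∈ T ∪ S, w ≠ a → w ≠ b → G.Adj a w) →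
      ∀ x y, G.Adj a x → G.Adj a y → x ∉ T ∪ S → y ∉ T ∪ S → x = y := by
    intro a b haS hbS hab hnab haAdj x y hax hay hxTS hyTS
    by_contra hne
    have hsub : ((T ∪ S).erase a).erase b ∪ {x, y} ⊆ G.neighborFinset a := by
      intro w hw
      rw [SimpleGraph.mem_neighborFinset]
      rcases Finset.mem_union.mp hw with hw' | hw'
      · obtain ⟨hwb, hw''⟩ := Finset.mem_erase.mp hw'
        obtain ⟨hwa, hwTS⟩ := Finset.mem_erase.mp hw''
        exact haAdj w hwTS hwa hwb
      · rcases Finset.mem_insert.mp hw' with rfl | hw''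
        · exact hax
        · rw [Finset.mem_singleton.mp hw'']; exact hay
    have hxa : x ∉ ((T ∪ S).erase a).erase b :=
      fun h => hxTS (Finset.mem_of_mem_erase (Finset.mem_of_mem_erase h))
    have hya : y ∉ ((T ∪ S).erase a).erase b :=
      fun h => hyTS (Finset.mem_of_mem_erase (Finset.mem_of_mem_erase h))
    have hd : Disjoint (((T ∪ S).erase a).erase b) ({x, y} : Finset V) := by
      rw [Finset.disjoint_right]
      intro w hw
      rcases Finset.mem_insert.mp hw with rfl | hw'
      · exact hxa
      · rw [Finset.mem_singleton.mp hw']; exact hya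
    have hbe : b ∈ (T ∪ S).erase a :=
      Finset.mem_erase.mpr ⟨fun h => hab h.symm, Finset.mem_union_right _ hbS⟩
    have hc1 : (((T ∪ S).erase a).erase b).card = r - 1 := by
      rw [Finset.card_erase_of_mem hbe, Finset.card_erase_of_mem
        (Finset.mem_union_right _ haS), hcardU]
      omega
    have hc2 : ({x, y} : Finset V).card = 2 := Finset.card_pair hne
    have hle : (((T ∪ S).erase a).erase b ∪ {x, y}).card ≤ G.degree a := by
      rw [SimpleGraph.degree]; exact Finset.card_le_card hsub
    rw [Finset.card_union_of_disjoint hd, hc1, hc2] at hle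
    have := G.degree_le_maxDegree a
    have hr1 : 1 ≤ r := by
      -- since b ∈ (T ∪ S).erase a, the set T ∪ S has at least 2 elements
      omega
    omega
  have hUniqU : ∀ x y, G.Adj u x → G.Adj u y → x ∉ T ∪ S → y ∉ T ∪ S → x = y :=
    hUniqGen u v hu hv huv hnadj huAdj
  have hUniqV : ∀ x y, G.Adj v x → G.Adj v y → x ∉ T ∪ S → y ∉ T ∪ S → x = y :=
    hUniqGen v u hv hu huv.symm (fun h => hnadj h.symm) (fun w hw h1 h2 => hvAdj w hw h2 h1)
  -- adjacency characterization in G'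
  have hadj' : ∀ x y : V, G'.Adj x y ↔
      x ≠ y ∧ ((x = u ∧ y = v) ∨ (x = v ∧ y = u) ∨
        (G.Adj x y ∧ ((x = u ∨ x = v) → y ∈ T ∪ S) ∧ ((y = u ∨ y = v) → x ∈ T ∪ S))) := by
    intro x y
    rw [hG', SimpleGraph.fromRel_adj]
    simp only [Finset.mem_insert, Finset.mem_singleton, not_and, not_not, ← hSdefn]
    refine and_congr_right fun hne => ?_
    constructor
    · rintro ((⟨h1, h2⟩ | ⟨ha, hc1, hc2⟩) | (⟨h1, h2⟩ | ⟨ha, hc1, hc2⟩))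
      · exact Or.inl ⟨h1, h2⟩
      · exact Or.inr (Or.inr ⟨ha, hc1, hc2⟩)
      · exact Or.inr (Or.inl ⟨h2, h1⟩)
      · exact Or.inr (Or.inr ⟨ha.symm, hc2, hc1⟩)
    · rintro (⟨h1, h2⟩ | ⟨h1, h2⟩ | ⟨ha, hc1, hc2⟩)
      · exact Or.inl (Or.inl ⟨h1, h2⟩)
      · exact Or.inr (Or.inl ⟨h2, h1⟩)
      · exact Or.inl (Or.inr ⟨ha, hc1, hc2⟩)
  clear hG'
  constructor
  · -- bound on the maximum degree of G'
    apply SimpleGraph.maxDegree_le_of_forall_degree_le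
    intro w
    by_cases hwu : w = u
    · subst hwu
      have hsub : G'.neighborFinset w ⊆ (T ∪ S).erase w := by
        intro y hy
        rw [SimpleGraph.mem_neighborFinset, hadj'] at hy
        obtain ⟨hne, hcase⟩ := hy
        refine Finset.mem_erase.mpr ⟨fun h => hne h.symm, ?_⟩
        rcases hcase with ⟨_, rfl⟩ | ⟨h1, _⟩ | ⟨_, hc, _⟩
        · exact Finset.mem_union_right _ hv
        · exact absurd h1 huv
        · exact hc (Or.inl rfl)
      have h1 : G'.degree w ≤ ((T ∪ S).erase w).card := Finset.card_le_card hsub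
      rw [Finset.card_erase_of_mem (Finset.mem_union_right _ hu), hcardU] at h1
      omega
    by_cases hwv : w = v
    · subst hwv
      have hsub : G'.neighborFinset w ⊆ (T ∪ S).erase w := by
        intro y hy
        rw [SimpleGraph.mem_neighborFinset, hadj'] at hy
        obtain ⟨hne, hcase⟩ := hy
        refine Finset.mem_erase.mpr ⟨fun h => hne h.symm, ?_⟩
        rcases hcase with ⟨h1, _⟩ | ⟨_, rfl⟩ | ⟨_, hc, _⟩
        · exact absurd h1 huv.symm
        · exact Finset.mem_union_right _ hu
        · exact hc (Or.inr rfl)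
      have h1 : G'.degree w ≤ ((T ∪ S).erase w).card := Finset.card_le_card hsub
      rw [Finset.card_erase_of_mem (Finset.mem_union_right _ hv), hcardU] at h1
      omega
    · have hsub : G'.neighborFinset w ⊆ G.neighborFinset w := by
        intro y hy
        rw [SimpleGraph.mem_neighborFinset, hadj'] at hy
        rw [SimpleGraph.mem_neighborFinset]
        rcases hy.2 with ⟨h1, _⟩ | ⟨h1, _⟩ | ⟨h, _, _⟩
        · exact absurd h1 hwu
        · exact absurd h1 hwv
        · exact h
      have h1 : G'.degree w ≤ G.degree w := Finset.card_le_card hsub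
      exact le_trans h1 (le_trans (G.degree_le_maxDegree w) hdeg)
  · -- the clique count increases
    set SS := S \ ({u, v} : Finset V) with hSSdefn
    set A := T ∪ SS with hAdefn
    have hSSsub : SS ⊆ S := Finset.sdiff_subset
    have hSSmem : ∀ w ∈ S, w ≠ u → w ≠ v → w ∈ SS := by
      intro w hw h1 h2
      rw [hSSdefn, Finset.mem_sdiff]
      exact ⟨hw, by simp [h1, h2]⟩
    have huSS : u ∉ SS := by simp [hSSdefn]
    have hvSS : v ∉ SS := by simp [hSSdefn]
    have huA : u ∉ A := by
      rw [hAdefn, Finset.mem_union]; rintro (h | h); exacts [huT h, huSS h]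
    have hvA : v ∉ A := by
      rw [hAdefn, Finset.mem_union]; rintro (h | h); exacts [hvT h, hvSS h]
    have hAsub : A ⊆ T ∪ S := Finset.union_subset_union_right hSSsub
    have hAadjU : ∀ w ∈ A, G.Adj u w := by
      intro w hw
      exact huAdj w (hAsub hw) (ne_of_mem_of_not_mem hw huA) (ne_of_mem_of_not_mem hw hvA)
    have hAadjV : ∀ w ∈ A, G.Adj v w := by
      intro w hw
      exact hvAdj w (hAsub hw) (ne_of_mem_of_not_mem hw huA) (ne_of_mem_of_not_mem hw hvA)
    simp only [cliqueCount]
    set Old := univ.filter fun s : Finset V => G.IsClique (s : Set V) with hOld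
    set New := univ.filter fun s : Finset V => G'.IsClique (s : Set V) with hNew
    set KA := univ.filter fun s : Finset V => G.IsClique (s : Set V) ∧ s ⊆ A with hKA
    set KS := univ.filter fun s : Finset V => G.IsClique (s : Set V) ∧ s ⊆ SS with hKS
    -- bound on lost cliques
    have hbound1 : (Old \ New).card ≤ 2 * KS.card := by
      set lostU := univ.filter fun L : Finset V =>
        (G.IsClique (L : Set V) ∧ ¬ G'.IsClique (L : Set V)) ∧ u ∈ L with hlU
      set lostV := univ.filter fun L : Finset V =>
        (G.IsClique (L : Set V) ∧ ¬ G'.IsClique (L : Set V)) ∧ v ∈ L with hlV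
      have hUnion : Old \ New ⊆ lostU ∪ lostV := by
        intro L hL
        rw [Finset.mem_sdiff, hOld, hNew, Finset.mem_filter, Finset.mem_filter] at hL
        obtain ⟨⟨_, hc⟩, hnc⟩ := hL
        have hnc' : ¬ G'.IsClique (L : Set V) := fun h => hnc ⟨Finset.mem_univ _, h⟩
        have hmem : u ∈ L ∨ v ∈ L := by
          by_contra hcon
          push_neg at hcon
          apply hnc'
          rw [SimpleGraph.isClique_iff]
          intro x hx y hy hxy
          have hGxy : G.Adj x y := hc hx hy hxy
          rw [hadj']
          refine ⟨hxy, Or.inr (Or.inr ⟨hGxy, ?_, ?_⟩)⟩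
          · rintro (rfl | rfl)
            · exact absurd (Finset.mem_coe.mp hx) hcon.1
            · exact absurd (Finset.mem_coe.mp hx) hcon.2
          · rintro (rfl | rfl)
            · exact absurd (Finset.mem_coe.mp hy) hcon.1
            · exact absurd (Finset.mem_coe.mp hy) hcon.2
        rw [Finset.mem_union, hlU, hlV, Finset.mem_filter, Finset.mem_filter]
        rcases hmem with h | h
        · exact Or.inl ⟨Finset.mem_univ _, ⟨hc, hnc'⟩, h⟩
        · exact Or.inr ⟨Finset.mem_univ _, ⟨hc, hnc'⟩, h⟩
      have hdisj : Disjoint lostU lostV := by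
        rw [Finset.disjoint_left]
        intro L hL1 hL2
        rw [hlU, Finset.mem_filter] at hL1
        rw [hlV, Finset.mem_filter] at hL2
        exact hnadj (hL1.2.1.1 (Finset.mem_coe.mpr hL1.2.2) (Finset.mem_coe.mpr hL2.2.2) huv)
      have hcU : lostU.card ≤ KS.card :=
        lost_bound G G' T S SS u v huv hnadj hu hadj' hTnbr hUniqU hSSmem
      have hadj'' : ∀ x y : V, G'.Adj x y ↔
          x ≠ y ∧ ((x = v ∧ y = u) ∨ (x = u ∧ y = v) ∨
            (G.Adj x y ∧ ((x = v ∨ x = u) → y ∈ T ∪ S) ∧ ((y = v ∨ y = u) → x ∈ T ∪ S))) := by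
        intro x y
        rw [hadj' x y]
        refine and_congr_right fun _ => ?_
        constructor
        · rintro (h | h | ⟨ha, h1, h2⟩)
          · exact Or.inr (Or.inl h)
          · exact Or.inl h
          · exact Or.inr (Or.inr ⟨ha, fun h => h1 h.symm, fun h => h2 h.symm⟩)
        · rintro (h | h | ⟨ha, h1, h2⟩)
          · exact Or.inr (Or.inl h)
          · exact Or.inl h
          · exact Or.inr (Or.inr ⟨ha, fun h => h1 h.symm, fun h => h2 h.symm⟩)
      have hcV : lostV.card ≤ KS.card :=
        lost_bound G G' T S SS v u huv.symm (fun h => hnadj h.symm) hv hadj'' hTnbr hUniqV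
          (fun w hw h1 h2 => hSSmem w hw h2 h1)
      calc (Old \ New).card ≤ (lostU ∪ lostV).card := Finset.card_le_card hUnion
        _ = lostU.card + lostV.card := Finset.card_union_of_disjoint hdisj
        _ ≤ 2 * KS.card := by omega
    -- gained cliques are in bijection with cliques inside A
    have hgain : (New \ Old).card = KA.card := by
      have hkey : ∀ D : Finset V, G'.IsClique (D : Set V) → ¬ G.IsClique (D : Set V) →
          u ∈ D ∧ v ∈ D ∧ G.IsClique ((D \ {u, v} : Finset V) : Set V) ∧ D \ {u, v} ⊆ A := by
        intro D hDclq hDnot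
        have huD : u ∈ D := by
          by_contra huD
          apply hDnot
          rw [SimpleGraph.isClique_iff]
          intro x hx y hy hxy
          have := hDclq hx hy hxy
          rw [hadj'] at this
          rcases this.2 with ⟨h1, _⟩ | ⟨_, h2⟩ | ⟨h, _, _⟩
          · exact absurd (Finset.mem_coe.mp (h1 ▸ hx)) huD
          · exact absurd (Finset.mem_coe.mp (h2 ▸ hy)) huD
          · exact h
        have hvD : v ∈ D := by
          by_contra hvD
          apply hDnot
          rw [SimpleGraph.isClique_iff]
          intro x hx y hy hxy
          have := hDclq hx hy hxy
          rw [hadj'] at this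
          rcases this.2 with ⟨_, h2⟩ | ⟨h1, _⟩ | ⟨h, _, _⟩
          · exact absurd (Finset.mem_coe.mp (h2 ▸ hy)) hvD
          · exact absurd (Finset.mem_coe.mp (h1 ▸ hx)) hvD
          · exact h
        refine ⟨huD, hvD, ?_, ?_⟩
        · rw [SimpleGraph.isClique_iff]
          intro x hx y hy hxy
          have hx' := Finset.mem_coe.mp hx
          have hy' := Finset.mem_coe.mp hy
          rw [Finset.mem_sdiff] at hx' hy'
          have hxuv : x ≠ u ∧ x ≠ v := by
            have := hx'.2; simp only [Finset.mem_insert, Finset.mem_singleton] at this; tauto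
          have hyuv : y ≠ u ∧ y ≠ v := by
            have := hy'.2; simp only [Finset.mem_insert, Finset.mem_singleton] at this; tauto
          have := hDclq (Finset.mem_coe.mpr hx'.1) (Finset.mem_coe.mpr hy'.1) hxy
          rw [hadj'] at this
          rcases this.2 with ⟨h1, _⟩ | ⟨h1, _⟩ | ⟨h, _, _⟩
          · exact absurd h1 hxuv.1
          · exact absurd h1 hxuv.2
          · exact h
        · intro w hw
          rw [Finset.mem_sdiff] at hw
          have hwuv : w ≠ u ∧ w ≠ v := by
            have := hw.2; simp only [Finset.mem_insert, Finset.mem_singleton] at this; tauto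
          have hadjuw := hDclq (Finset.mem_coe.mpr huD) (Finset.mem_coe.mpr hw.1)
            (fun h => hwuv.1 h.symm)
          rw [hadj'] at hadjuw
          rcases hadjuw.2 with ⟨_, h2⟩ | ⟨h1, _⟩ | ⟨_, hc1, _⟩
          · exact absurd h2 hwuv.2
          · exact absurd h1 huv
          · rcases Finset.mem_union.mp (hc1 (Or.inl rfl)) with h | h
            · exact Finset.mem_union_left _ h
            · exact Finset.mem_union_right _ (hSSmem w h hwuv.1 hwuv.2)
      have hNOmem : ∀ D : Finset V, D ∈ New \ Old ↔
          G'.IsClique (D : Set V) ∧ ¬ G.IsClique (D : Set V) := by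
        intro D
        rw [Finset.mem_sdiff, hNew, hOld, Finset.mem_filter, Finset.mem_filter]
        constructor
        · rintro ⟨⟨_, h1⟩, h2⟩; exact ⟨h1, fun h => h2 ⟨Finset.mem_univ _, h⟩⟩
        · rintro ⟨h1, h2⟩; exact ⟨⟨Finset.mem_univ _, h1⟩, fun h => h2 h.2⟩
      have hKAmem : ∀ C : Finset V, C ∈ KA ↔ G.IsClique (C : Set V) ∧ C ⊆ A := by
        intro C
        rw [hKA, Finset.mem_filter]
        exact ⟨fun h => h.2, fun h => ⟨Finset.mem_univ _, h⟩⟩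
      apply Finset.card_bij' (fun D _ => D \ ({u, v} : Finset V))
        (fun C _ => insert u (insert v C))
      · -- maps into KA
        intro D hD
        obtain ⟨h1, h2⟩ := (hNOmem D).mp hD
        obtain ⟨_, _, h3, h4⟩ := hkey D h1 h2
        exact (hKAmem _).mpr ⟨h3, h4⟩
      · -- maps into New \ Old
        intro C hC
        obtain ⟨hCclq, hCA⟩ := (hKAmem C).mp hC
        rw [hNOmem]
        constructor
        · rw [SimpleGraph.isClique_iff]
          intro x hx y hy hxy
          simp only [Finset.coe_insert, Set.mem_insert_iff, Finset.mem_coe] at hx hy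
          rw [hadj']
          refine ⟨hxy, ?_⟩
          rcases hx with rfl | rfl | hx <;> rcases hy with rfl | rfl | hy
          · exact absurd rfl hxy
          · exact Or.inl ⟨rfl, rfl⟩
          · exact Or.inr (Or.inr ⟨hAadjU y (hCA hy), fun _ => hAsub (hCA hy),
              fun _ => Finset.mem_union_right _ hu⟩)
          · exact Or.inr (Or.inl ⟨rfl, rfl⟩)
          · exact absurd rfl hxy
          · exact Or.inr (Or.inr ⟨hAadjV y (hCA hy), fun _ => hAsub (hCA hy),
              fun _ => Finset.mem_union_right _ hv⟩)
          · exact Or.inr (Or.inr ⟨(hAadjU x (hCA hx)).symm, fun _ => Finset.mem_union_right _ hu,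
              fun _ => hAsub (hCA hx)⟩)
          · exact Or.inr (Or.inr ⟨(hAadjV x (hCA hx)).symm, fun _ => Finset.mem_union_right _ hv,
              fun _ => hAsub (hCA hx)⟩)
          · exact Or.inr (Or.inr ⟨hCclq (Finset.mem_coe.mpr hx) (Finset.mem_coe.mpr hy) hxy,
              fun _ => hAsub (hCA hy), fun _ => hAsub (hCA hx)⟩)
        · intro h
          exact hnadj (h (by simp) (by simp) huv)
      · -- left inverse
        intro D hD
        obtain ⟨h1, h2⟩ := (hNOmem D).mp hD
        obtain ⟨huD, hvD, _, _⟩ := hkey D h1 h2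
        ext a
        simp only [Finset.mem_insert, Finset.mem_sdiff, Finset.mem_singleton]
        constructor
        · rintro (rfl | rfl | ⟨h, _⟩)
          exacts [huD, hvD, h]
        · intro haD
          by_cases h1 : a = u
          · exact Or.inl h1
          by_cases h2 : a = v
          · exact Or.inr (Or.inl h2)
          · exact Or.inr (Or.inr ⟨haD, not_or.mpr ⟨h1, h2⟩⟩)
      · -- right inverse
        intro C hC
        obtain ⟨_, hCA⟩ := (hKAmem C).mp hC
        ext a
        simp only [Finset.mem_sdiff, Finset.mem_insert, Finset.mem_singleton]
        constructor
        · rintro ⟨rfl | rfl | h, h2⟩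
          · exact absurd (Or.inl rfl) h2
          · exact absurd (Or.inr rfl) h2
          · exact h
        · intro ha
          refine ⟨Or.inr (Or.inr ha), not_or.mpr ⟨?_, ?_⟩⟩
          · exact ne_of_mem_of_not_mem (hCA ha) huA
          · exact ne_of_mem_of_not_mem (hCA ha) hvA
    -- cliques inside A are at least four times the cliques inside SS
    obtain ⟨t1, ht1, t2, ht2, ht12⟩ := Finset.one_lt_card.mp (by omega : 1 < T.card)
    have hpairT : ({t1, t2} : Finset V) ⊆ T := by
      intro x hx
      rcases Finset.mem_insert.mp hx with rfl | hx
      · exact ht1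
      · rw [Finset.mem_singleton.mp hx]; exact ht2
    have h4 : 4 * KS.card ≤ KA.card := by
      have hcard : (({t1, t2} : Finset V).powerset ×ˢ KS).card = 4 * KS.card := by
        rw [Finset.card_product, Finset.card_powerset,
          Finset.card_insert_of_notMem (by simp [ht12]), Finset.card_singleton]
        norm_num
      rw [← hcard]
      apply Finset.card_le_card_of_injOn (fun p => p.1 ∪ p.2)
      · intro p hp
        rw [Finset.mem_coe, Finset.mem_product, Finset.mem_powerset] at hp
        obtain ⟨hb, hC⟩ := hp
        rw [hKS, Finset.mem_filter] at hC
        obtain ⟨_, hCclq, hCS⟩ := hC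
        have hbT : p.1 ⊆ T := hb.trans hpairT
        rw [Finset.mem_coe, hKA, Finset.mem_filter]
        refine ⟨Finset.mem_univ _, ?_, ?_⟩
        · rw [SimpleGraph.isClique_iff]
          intro x hx y hy hxy
          simp only [Finset.coe_union, Set.mem_union, Finset.mem_coe] at hx hy
          rcases hx with hx | hx <;> rcases hy with hy | hy
          · exact hclqT (Finset.mem_coe.mpr (hbT hx)) (Finset.mem_coe.mpr (hbT hy)) hxy
          · exact hF3 x (hbT hx) y (hSSsub (hCS hy))
          · exact (hF3 y (hbT hy) x (hSSsub (hCS hx))).symm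
          · exact hCclq (Finset.mem_coe.mpr hx) (Finset.mem_coe.mpr hy) hxy
        · exact Finset.union_subset (hbT.trans Finset.subset_union_left)
            (hCS.trans Finset.subset_union_right)
      · intro p hp q hq heq
        have hp' := Finset.mem_product.mp (Finset.mem_coe.mp hp)
        have hq' := Finset.mem_product.mp (Finset.mem_coe.mp hq)
        have hpb : p.1 ⊆ T := (Finset.mem_powerset.mp hp'.1).trans hpairT
        have hqb : q.1 ⊆ T := (Finset.mem_powerset.mp hq'.1).trans hpairT
        have hpC : p.2 ⊆ SS := (Finset.mem_filter.mp hp'.2).2.2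
        have hqC : q.2 ⊆ SS := (Finset.mem_filter.mp hq'.2).2.2
        have hTpart : ∀ b C : Finset V, b ⊆ T → C ⊆ SS → (b ∪ C) ∩ T = b := by
          intro b C hb hC
          ext a
          simp only [Finset.mem_inter, Finset.mem_union]
          constructor
          · rintro ⟨h1 | h1, h2⟩
            · exact h1
            · exact absurd (hSSsub (hC h1)) (Finset.disjoint_left.mp hTSdisj h2)
          · intro h
            exact ⟨Or.inl h, hb h⟩
        have hSpart : ∀ b C : Finset V, b ⊆ T → C ⊆ SS → (b ∪ C) \ T = C := by
          intro b C hb hC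
          ext a
          simp only [Finset.mem_sdiff, Finset.mem_union]
          constructor
          · rintro ⟨h1 | h1, h2⟩
            · exact absurd (hb h1) h2
            · exact h1
          · intro h
            exact ⟨Or.inr h, Finset.disjoint_right.mp hTSdisj (hSSsub (hC h))⟩
        have heq' : p.1 ∪ p.2 = q.1 ∪ q.2 := heq
        have h1 : p.1 = q.1 := by
          rw [← hTpart p.1 p.2 hpb hpC, ← hTpart q.1 q.2 hqb hqC, heq']
        have h2 : p.2 = q.2 := by
          rw [← hSpart p.1 p.2 hpb hpC, ← hSpart q.1 q.2 hqb hqC, heq']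
        exact Prod.ext h1 h2
    have hKS1 : 1 ≤ KS.card := by
      apply Finset.card_pos.mpr
      refine ⟨∅, ?_⟩
      rw [hKS, Finset.mem_filter]
      exact ⟨Finset.mem_univ _, by simp, Finset.empty_subset _⟩
    have e1 : (Old ∩ New).card + (Old \ New).card = Old.card :=
      Finset.card_inter_add_card_sdiff Old New
    have e2 : (New ∩ Old).card + (New \ Old).card = New.card :=
      Finset.card_inter_add_card_sdiff New Old
    have e3 : (Old ∩ New).card = (New ∩ Old).card := by rw [Finset.inter_comm]
    omega
end

section
/- Let r ≥ 3 and let G be a simple graph on n vertices with maximum degree Δ(G) ≤ r which satisfies the strong inequalities: t · k_t(G) ≤ (r − t + 1) · k_{t−1}(G) for all t ≥ 3. If n = a(r+1) + b with a ≥ 1 and 0 ≤ b ≤ r, then k(G) < a(2^{r+1} − 1) + 2^b = k(aK_{r+1} ∪ K_b). -/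
open Classical Finset

open Paper

namespace Cor53

open Paper

variable {V : Type*} [Fintype V]

lemma ccs_zero (G : SimpleGraph V) : cliqueCountSize G 0 = 1 := by
  unfold cliqueCountSize
  rw [show (Finset.univ.filter fun s : Finset V => G.IsClique (s : Set V) ∧ s.card = 0)
      = {(∅ : Finset V)} from ?_]
  · simp
  · ext s
    simp only [mem_filter, mem_univ, true_and, mem_singleton, Finset.card_eq_zero]
    constructor
    · rintro ⟨_, h⟩; exact h
    · rintro rfl; simp [SimpleGraph.IsClique]

lemma ccs_one (G : SimpleGraph V) : cliqueCountSize G 1 = Fintype.card V := by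
  unfold cliqueCountSize
  rw [show (Finset.univ.filter fun s : Finset V => G.IsClique (s : Set V) ∧ s.card = 1)
      = Finset.univ.image (fun v : V => ({v} : Finset V)) from ?_]
  · rw [Finset.card_image_of_injective _ (fun u v h => by simpa using h)]
    simp
  · ext s
    simp only [mem_filter, mem_univ, true_and, mem_image, Finset.card_eq_one]
    constructor
    · rintro ⟨_, v, rfl⟩; exact ⟨v, rfl⟩
    · rintro ⟨v, rfl⟩; exact ⟨by simp [SimpleGraph.IsClique], v, rfl⟩

lemma cc_sum (G : SimpleGraph V) :
    cliqueCount G = ∑ t ∈ range (Fintype.card V + 1), cliqueCountSize G t := by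
  unfold cliqueCount cliqueCountSize
  rw [Finset.card_eq_sum_card_fiberwise (f := fun s : Finset V => s.card)
    (t := range (Fintype.card V + 1))]
  · refine Finset.sum_congr rfl fun t _ => ?_
    congr 1
    ext s; simp [and_comm, and_assoc]
  · intro s hs
    simp only [Finset.mem_coe, mem_range, Nat.lt_succ_iff]
    have := s.card_le_univ
    omega

lemma deg_sum_eq (G : SimpleGraph V) : ∑ v, G.degree v = 2 * cliqueCountSize G 2 := by
  classical
  have h1 : ∑ v, G.degree v
      = (Finset.univ.filter fun p : V × V => G.Adj p.1 p.2).card := by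
    rw [Finset.card_eq_sum_card_fiberwise (f := Prod.fst) (t := univ) (fun _ _ => mem_univ _)]
    refine Finset.sum_congr rfl fun v _ => ?_
    rw [SimpleGraph.degree]
    apply Finset.card_bij (fun w _ => (v, w))
    · intro w hw
      simp only [SimpleGraph.mem_neighborFinset] at hw
      simp [hw]
    · intro w _ w' _ h
      exact (Prod.mk.injEq _ _ _ _).mp h |>.2
    · intro p hp
      simp only [mem_filter, mem_univ, true_and] at hp
      exact ⟨p.2, by simp [hp.2 ▸ hp.1], by rw [← hp.2]⟩
  rw [h1, cliqueCountSize]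
  rw [Finset.card_eq_sum_card_fiberwise (f := fun p : V × V => ({p.1, p.2} : Finset V))
    (t := Finset.univ.filter fun s : Finset V => G.IsClique (s : Set V) ∧ s.card = 2)]
  · rw [Finset.sum_congr rfl (g := fun _ => 2), Finset.sum_const, smul_eq_mul, mul_comm]
    intro s hs
    simp only [mem_filter, mem_univ, true_and] at hs
    obtain ⟨u, w, huw, rfl⟩ := Finset.card_eq_two.mp hs.2
    have hadj : G.Adj u w := hs.1 (by simp) (by simp) huw
    rw [show (Finset.univ.filter fun p : V × V => G.Adj p.1 p.2).filter
        (fun p => ({p.1, p.2} : Finset V) = {u, w}) = {(u, w), (w, u)} from ?_]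
    · rw [Finset.card_insert_of_notMem (by simp [huw]), Finset.card_singleton]
    · ext ⟨x, y⟩
      simp only [mem_filter, mem_univ, true_and, mem_insert, mem_singleton, Prod.mk.injEq]
      constructor
      · rintro ⟨hxy, hset⟩
        have hx : x ∈ ({u, w} : Finset V) := hset ▸ (by simp : x ∈ ({x, y} : Finset V))
        have hy : y ∈ ({u, w} : Finset V) := hset ▸ (by simp : y ∈ ({x, y} : Finset V))
        simp only [mem_insert, mem_singleton] at hx hy
        rcases hx with rfl | rfl <;> rcases hy with rfl | rfl
        · exact absurd rfl hxy.ne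
        · left; exact ⟨rfl, rfl⟩
        · right; exact ⟨rfl, rfl⟩
        · exact absurd rfl hxy.ne
      · rintro (⟨rfl, rfl⟩ | ⟨rfl, rfl⟩)
        · exact ⟨hadj, rfl⟩
        · exact ⟨hadj.symm, by rw [Finset.pair_comm]⟩
  · intro p hp
    simp only [Finset.mem_coe, mem_filter, mem_univ, true_and] at hp ⊢
    refine ⟨?_, Finset.card_pair hp.ne⟩
    intro x hx y hy hxy
    simp only [Finset.coe_insert, Set.mem_insert_iff, Finset.coe_singleton,
      Set.mem_singleton_iff] at hx hy
    rcases hx with rfl | rfl <;> rcases hy with rfl | rfl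
    · exact absurd rfl hxy
    · exact hp
    · exact hp.symm
    · exact absurd rfl hxy

variable {G : SimpleGraph V} {r n : ℕ}

lemma ccs_vanish (hstrong : ∀ t : ℕ, 3 ≤ t →
      (t : ℤ) * cliqueCountSize G t ≤ ((r : ℤ) - t + 1) * cliqueCountSize G (t - 1))
    (hr : 3 ≤ r) {t : ℕ} (ht : r + 1 ≤ t) : cliqueCountSize G t = 0 := by
  have h := hstrong t (by omega)
  have hc : ((r : ℤ) - t + 1) ≤ 0 := by
    have : (r : ℤ) + 1 ≤ t := by exact_mod_cast ht
    linarith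
  have h0 : ((r : ℤ) - t + 1) * cliqueCountSize G (t - 1) ≤ 0 :=
    mul_nonpos_of_nonpos_of_nonneg hc (by positivity)
  have ht0 : (0 : ℤ) < t := by exact_mod_cast (by omega : 0 < t)
  nlinarith [h.trans h0, (by positivity : (0:ℤ) ≤ (cliqueCountSize G t : ℤ))]

lemma ccs_chain (hstrong : ∀ t : ℕ, 3 ≤ t →
      (t : ℤ) * cliqueCountSize G t ≤ ((r : ℤ) - t + 1) * cliqueCountSize G (t - 1))
    (hr : 3 ≤ r) (h2 : 2 * cliqueCountSize G 2 ≤ n * r) :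
    ∀ t, 2 ≤ t → t ≤ r →
      ((r : ℤ) - 1) * cliqueCountSize G t ≤ (n : ℤ) * r.choose t := by
  intro t
  induction t with
  | zero => omega
  | succ t ih =>
    intro h2t htr
    rcases Nat.lt_or_ge t 2 with hlt | hge
    · have ht1 : t = 1 := by omega
      subst ht1
      have hch : (r.choose 2 : ℤ) * 2 = (r : ℤ) * (r - 1) := by
        have := Nat.choose_two_right r
        have h2' : 2 * r.choose 2 = r * (r - 1) := by
          rw [this]; rw [Nat.mul_div_cancel' (Nat.even_mul_pred_self r).two_dvd]
        have := congrArg (fun x : ℕ => (x : ℤ)) h2'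
        push_cast [Nat.cast_sub (by omega : 1 ≤ r)] at this
        linarith
      have hcast : (2 : ℤ) * cliqueCountSize G 2 ≤ (n : ℤ) * r := by exact_mod_cast h2
      nlinarith [(by positivity : (0:ℤ) ≤ (cliqueCountSize G 2 : ℤ)),
        (by exact_mod_cast hr : (3:ℤ) ≤ (r:ℤ))]
    · have hind := ih hge (by omega)
      have hs := hstrong (t + 1) (by omega)
      simp only [Nat.add_sub_cancel] at hs
      push_cast at hs
      have hco : ((r : ℤ) - ((t:ℤ)+1) + 1) = (r : ℤ) - t := by ring
      rw [hco] at hs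
      have hch : ((t : ℤ) + 1) * r.choose (t+1) = ((r : ℤ) - t) * r.choose t := by
        have := Nat.choose_succ_right_eq r t
        have := congrArg (fun x : ℕ => (x : ℤ)) this
        push_cast [Nat.cast_sub (by omega : t ≤ r)] at this
        linarith
      have hrt : (0 : ℤ) ≤ (r : ℤ) - t := by
        have : (t : ℤ) ≤ r := by exact_mod_cast (by omega : t ≤ r)
        linarith
      have key : ((t : ℤ) + 1) * (((r:ℤ) - 1) * cliqueCountSize G (t+1))
          ≤ ((t : ℤ) + 1) * ((n : ℤ) * r.choose (t+1)) := by
        have hr1 : (0 : ℤ) ≤ (r : ℤ) - 1 := by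
          have : (3:ℤ) ≤ r := by exact_mod_cast hr
          linarith
        calc ((t : ℤ) + 1) * (((r:ℤ) - 1) * cliqueCountSize G (t+1))
            = ((r:ℤ) - 1) * (((t:ℤ)+1) * cliqueCountSize G (t+1)) := by ring
          _ ≤ ((r:ℤ) - 1) * (((r:ℤ) - t) * cliqueCountSize G t) := by
              exact mul_le_mul_of_nonneg_left hs hr1
          _ = ((r:ℤ) - t) * (((r:ℤ) - 1) * cliqueCountSize G t) := by ring
          _ ≤ ((r:ℤ) - t) * ((n : ℤ) * r.choose t) := mul_le_mul_of_nonneg_left hind hrt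
          _ = (n : ℤ) * (((r:ℤ) - t) * r.choose t) := by ring
          _ = ((t : ℤ) + 1) * ((n : ℤ) * r.choose (t+1)) := by rw [← hch]; ring
      have hpos : (0 : ℤ) < (t : ℤ) + 1 := by positivity
      exact le_of_mul_le_mul_left key hpos

lemma main_bound (hr : 3 ≤ r) (hcard : Fintype.card V = n) (hnr : r + 1 ≤ n)
    (hvan : ∀ {t : ℕ}, r + 1 ≤ t → cliqueCountSize G t = 0)
    (hch : ∀ t, 2 ≤ t → t ≤ r →
      ((r : ℤ) - 1) * cliqueCountSize G t ≤ (n : ℤ) * r.choose t) :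
    ((r : ℤ) - 1) * cliqueCount G ≤ ((r : ℤ) - 1) + (n : ℤ) * (2 ^ r - 2) := by
  have hsum : (cliqueCount G : ℤ)
      = ∑ t ∈ range (r + 1), (cliqueCountSize G t : ℤ) := by
    rw [cc_sum G, hcard]
    rw [← Finset.sum_subset (Finset.range_subset_range.mpr (by omega : r + 1 ≤ n + 1))
      (fun x _ hx => hvan (by simp at hx; omega))]
    push_cast
    rfl
  have hsplit : ∑ t ∈ range (r + 1), (cliqueCountSize G t : ℤ)
      = 1 + (n : ℤ) + ∑ t ∈ Ico 2 (r + 1), (cliqueCountSize G t : ℤ) := by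
    rw [Finset.range_eq_Ico,
      ← Finset.sum_Ico_consecutive _ (by omega : 0 ≤ 2) (by omega : 2 ≤ r + 1)]
    have : Finset.Ico 0 2 = {0, 1} := rfl
    rw [this]
    simp [ccs_zero G, ccs_one G, hcard]
  have hIco : ∑ t ∈ Ico 2 (r + 1), ((r : ℤ) - 1) * cliqueCountSize G t
      ≤ ∑ t ∈ Ico 2 (r + 1), (n : ℤ) * r.choose t := by
    apply Finset.sum_le_sum
    intro t ht
    simp only [Finset.mem_Ico] at ht
    exact hch t ht.1 (by omega)
  have hchoose : ∑ t ∈ Ico 2 (r + 1), ((r.choose t : ℤ)) = 2 ^ r - 1 - r := by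
    have h := Nat.sum_range_choose r
    have : ∑ t ∈ range (r + 1), ((r.choose t : ℤ)) = 2 ^ r := by
      have := congrArg (fun x : ℕ => (x : ℤ)) h
      push_cast at this
      exact this
    rw [Finset.range_eq_Ico,
      ← Finset.sum_Ico_consecutive _ (by omega : 0 ≤ 2) (by omega : 2 ≤ r + 1)] at this
    have h01 : Finset.Ico 0 2 = {0, 1} := rfl
    rw [h01] at this
    simp at this
    linarith
  have hr1 : (0 : ℤ) ≤ (r : ℤ) - 1 := by
    have : (3:ℤ) ≤ r := by exact_mod_cast hr
    linarith
  calc ((r : ℤ) - 1) * cliqueCount G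
      = ((r:ℤ)-1) * (1 + n) + ∑ t ∈ Ico 2 (r + 1), ((r : ℤ) - 1) * cliqueCountSize G t := by
        rw [hsum, hsplit, mul_add, Finset.mul_sum]
    _ ≤ ((r:ℤ)-1) * (1 + n) + (n : ℤ) * (2 ^ r - 1 - r) := by
        refine add_le_add le_rfl (hIco.trans_eq ?_)
        rw [← Finset.mul_sum, hchoose]
    _ = ((r : ℤ) - 1) + (n : ℤ) * (2 ^ r - 2) := by ring

end Cor53

section Numeric

lemma Dlem (r b : ℕ) (hr : 3 ≤ r) (hb : b ≤ r) :
    (0:ℤ) ≤ 2^r*((r:ℤ)-3-(b:ℤ)) + ((r:ℤ)-1)*2^b + 2*(b:ℤ) + 4 ∧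
    (¬(r = 3 ∧ b = 2) → (1:ℤ) ≤ 2^r*((r:ℤ)-3-(b:ℤ)) + ((r:ℤ)-1)*2^b + 2*(b:ℤ) + 4) := by
  have hx : (1:ℤ) ≤ 2^b := one_le_pow₀ (by norm_num)
  have hxr : (0:ℤ) ≤ 2^r := by positivity
  rcases (by omega : b + 3 ≤ r ∨ r = b + 2 ∨ r = b + 1 ∨ r = b) with h | h | h | h
  · have h1 : (0:ℤ) ≤ (r:ℤ)-3-(b:ℤ) := by
      have : ((b:ℤ) + 3) ≤ r := by exact_mod_cast h
      linarith
    have h2 : (2:ℤ) ≤ (r:ℤ) - 1 := by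
      have : (3:ℤ) ≤ r := by exact_mod_cast hr
      linarith
    constructor
    · nlinarith [mul_nonneg hxr h1, mul_nonneg (by linarith : (0:ℤ) ≤ (r:ℤ)-1) (by linarith : (0:ℤ) ≤ (2:ℤ)^b)]
    · intro _
      nlinarith [mul_nonneg hxr h1]
  · -- r = b + 2, b ≥ 1
    subst h
    have hb1 : 1 ≤ b := by omega
    have hpow : (2:ℤ)^(b+2) = 4 * 2^b := by rw [pow_add]; ring
    rw [hpow]
    push_cast
    have key : 4 * (2:ℤ)^b * ((b:ℤ)+2-3-b) + ((b:ℤ)+2-1)*2^b + 2*b + 4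
        = 2^b * ((b:ℤ)-3) + 2*b + 4 := by ring
    rcases (by omega : b = 1 ∨ b = 2 ∨ 3 ≤ b) with rfl | rfl | h3
    · norm_num
    · norm_num
    · have hb3 : (3:ℤ) ≤ (b:ℤ) := by exact_mod_cast h3
      have : (0:ℤ) ≤ 2^b * ((b:ℤ)-3) := mul_nonneg (by positivity) (by linarith)
      constructor <;> [skip; intro _] <;> nlinarith
  · -- r = b + 1, b ≥ 2
    subst h
    have hb1 : 2 ≤ b := by omega
    have hpow : (2:ℤ)^(b+1) = 2 * 2^b := by rw [pow_add]; ring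
    rw [hpow]
    push_cast
    rcases (by omega : b = 2 ∨ b = 3 ∨ 4 ≤ b) with rfl | rfl | h3
    · constructor
      · norm_num
      · intro hx2; exact absurd ⟨rfl, rfl⟩ hx2
    · norm_num
    · have hb3 : (4:ℤ) ≤ (b:ℤ) := by exact_mod_cast h3
      have : (0:ℤ) ≤ 2^b * ((b:ℤ)-4) := mul_nonneg (by positivity) (by linarith)
      constructor <;> [skip; intro _] <;> nlinarith
  · -- r = b
    subst h
    rcases (by omega : r = 3 ∨ 4 ≤ r) with rfl | h3
    · norm_num
    · have hb3 : (4:ℤ) ≤ (r:ℤ) := by exact_mod_cast h3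
      have : (0:ℤ) ≤ 2^r * ((r:ℤ)-4) := mul_nonneg (by positivity) (by linarith)
      constructor <;> [skip; intro _] <;> nlinarith

lemma numeric (r a b : ℕ) (hr : 3 ≤ r) (ha : 1 ≤ a) (hb : b ≤ r)
    (hex : ¬(r = 3 ∧ a = 1 ∧ b = 2)) :
    ((r:ℤ) - 1) + ((a:ℤ)*((r:ℤ)+1)+(b:ℤ)) * (2^r - 2) + 1
      ≤ ((r:ℤ)-1) * ((a:ℤ) * (2^(r+1)-1) + 2^b) := by
  have hpow : (2:ℤ)^(r+1) = 2 * 2^r := by rw [pow_add]; ring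
  have key : ((r:ℤ)-1) * ((a:ℤ) * (2^(r+1)-1) + 2^b)
      - (((r:ℤ) - 1) + ((a:ℤ)*((r:ℤ)+1)+(b:ℤ)) * (2^r - 2))
      = ((a:ℤ)-1) * (2^r*((r:ℤ)-3)+(r:ℤ)+3)
        + (2^r*((r:ℤ)-3-(b:ℤ)) + ((r:ℤ)-1)*2^b + 2*(b:ℤ) + 4) := by
    rw [hpow]; ring
  have hC : (0:ℤ) ≤ 2^r*((r:ℤ)-3)+(r:ℤ)+3 ∧ (1:ℤ) ≤ 2^r*((r:ℤ)-3)+(r:ℤ)+3 := by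
    have h3 : (3:ℤ) ≤ (r:ℤ) := by exact_mod_cast hr
    have : (0:ℤ) ≤ 2^r * ((r:ℤ)-3) := mul_nonneg (by positivity) (by linarith)
    exact ⟨by linarith, by linarith⟩
  have ha1 : (1:ℤ) ≤ (a:ℤ) := by exact_mod_cast ha
  obtain ⟨hD0, hD1⟩ := Dlem r b hr hb
  by_cases hcase : r = 3 ∧ b = 2
  · -- then a ≥ 2
    have ha2 : 2 ≤ a := by
      rcases Nat.lt_or_ge a 2 with h | h
      · exact absurd ⟨hcase.1, by omega, hcase.2⟩ hex
      · exact h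
    have ha2' : (2:ℤ) ≤ (a:ℤ) := by exact_mod_cast ha2
    nlinarith [hC.2]
  · have := hD1 hcase
    nlinarith [hC.1]

end Numeric

namespace Cor53graph
open Classical Finset

variable {V : Type*} [Fintype V] {G : SimpleGraph V}

lemma diamond (hcard : Fintype.card V = 6) (hdeg : ∀ v : V, G.degree v = 3)
    (hK4 : ∀ s : Finset V, G.IsClique (s : Set V) → s.card ≠ 4)
    (v c p q : V) (hcp : c ≠ p) (hcq : c ≠ q) (hpq : p ≠ q)
    (avc : G.Adj v c) (avp : G.Adj v p) (avq : G.Adj v q)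
    (acp : G.Adj c p) (acq : G.Adj c q) : False := by
  classical
  have hvc := avc.ne
  have hvp := avp.ne
  have hvq := avq.ne
  by_cases apq : G.Adj p q
  · -- 4-clique {v,c,p,q}
    refine hK4 {v, c, p, q} ?_ ?_
    · intro x hx y hy hxy
      simp only [Finset.coe_insert, Set.mem_insert_iff, Finset.coe_singleton,
        Set.mem_singleton_iff] at hx hy
      rcases hx with rfl | rfl | rfl | rfl <;> rcases hy with rfl | rfl | rfl | rfl <;>
        first
          | exact absurd rfl hxy
          | assumption
          | exact avc.symm
          | exact avp.symm
          | exact avq.symm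
          | exact acp.symm
          | exact acq.symm
          | exact apq.symm
    · rw [Finset.card_insert_of_notMem (by simp [hvc, hvp, hvq]),
        Finset.card_insert_of_notMem (by simp [hcp, hcq]),
        Finset.card_insert_of_notMem (by simp [hpq]), Finset.card_singleton]
  · -- no edge pq
    have hNv : G.neighborFinset v = {c, p, q} := by
      refine (Finset.eq_of_subset_of_card_le ?_ ?_).symm
      · intro x hx
        simp only [Finset.mem_insert, Finset.mem_singleton] at hx
        rcases hx with rfl | rfl | rfl <;> simp [SimpleGraph.mem_neighborFinset, avc, avp, avq]
      · rw [show (G.neighborFinset v).card = 3 from hdeg v,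
          Finset.card_insert_of_notMem (by simp [hcp, hcq]),
          Finset.card_insert_of_notMem (by simp [hpq]), Finset.card_singleton]
    have hNc : G.neighborFinset c = {v, p, q} := by
      refine (Finset.eq_of_subset_of_card_le ?_ ?_).symm
      · intro x hx
        simp only [Finset.mem_insert, Finset.mem_singleton] at hx
        rcases hx with rfl | rfl | rfl <;>
          simp [SimpleGraph.mem_neighborFinset, avc.symm, acp, acq]
      · rw [show (G.neighborFinset c).card = 3 from hdeg c,
          Finset.card_insert_of_notMem (by simp [hvp, hvq]),
          Finset.card_insert_of_notMem (by simp [hpq]), Finset.card_singleton]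
    -- the two remaining vertices
    have hW : (Finset.univ \ {v, c, p, q} : Finset V).card = 2 := by
      rw [Finset.card_sdiff_of_subset (Finset.subset_univ _), Finset.card_univ, hcard,
        Finset.card_insert_of_notMem (by simp [hvc, hvp, hvq]),
        Finset.card_insert_of_notMem (by simp [hcp, hcq]),
        Finset.card_insert_of_notMem (by simp [hpq]), Finset.card_singleton]
    obtain ⟨s, t, hst, hWst⟩ := Finset.card_eq_two.mp hW
    have hs : s ∈ Finset.univ \ ({v, c, p, q} : Finset V) := by rw [hWst]; simp
    have ht : t ∈ Finset.univ \ ({v, c, p, q} : Finset V) := by rw [hWst]; simp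
    simp only [Finset.mem_sdiff, Finset.mem_univ, true_and, Finset.mem_insert,
      Finset.mem_singleton, not_or] at hs ht
    obtain ⟨hsv, hsc, hsp, hsq⟩ := hs
    obtain ⟨htv, htc, htp, htq⟩ := ht
    -- universe is exactly these six
    have huniv : ({v, c, p, q, s, t} : Finset V) = Finset.univ := by
      apply Finset.eq_of_subset_of_card_le (Finset.subset_univ _)
      rw [Finset.card_univ, hcard,
        Finset.card_insert_of_notMem (by simp [hvc, hvp, hvq, Ne.symm hsv, Ne.symm htv]),
        Finset.card_insert_of_notMem (by simp [hcp, hcq, Ne.symm hsc, Ne.symm htc]),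
        Finset.card_insert_of_notMem (by simp [hpq, Ne.symm hsp, Ne.symm htp]),
        Finset.card_insert_of_notMem (by simp [Ne.symm hsq, Ne.symm htq]),
        Finset.card_insert_of_notMem (by simp [hst]), Finset.card_singleton]
    have hnsv : ¬ G.Adj s v := fun h => by
      have : s ∈ G.neighborFinset v := by simp [SimpleGraph.mem_neighborFinset, h.symm]
      rw [hNv] at this
      simp only [Finset.mem_insert, Finset.mem_singleton] at this
      tauto
    have hnsc : ¬ G.Adj s c := fun h => by
      have : s ∈ G.neighborFinset c := by simp [SimpleGraph.mem_neighborFinset, h.symm]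
      rw [hNc] at this
      simp only [Finset.mem_insert, Finset.mem_singleton] at this
      tauto
    have hntv : ¬ G.Adj t v := fun h => by
      have : t ∈ G.neighborFinset v := by simp [SimpleGraph.mem_neighborFinset, h.symm]
      rw [hNv] at this
      simp only [Finset.mem_insert, Finset.mem_singleton] at this
      tauto
    have hntc : ¬ G.Adj t c := fun h => by
      have : t ∈ G.neighborFinset c := by simp [SimpleGraph.mem_neighborFinset, h.symm]
      rw [hNc] at this
      simp only [Finset.mem_insert, Finset.mem_singleton] at this
      tauto
    -- N(s) = {p, q, t}
    have hNs : G.neighborFinset s = {p, q, t} := by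
      apply Finset.eq_of_subset_of_card_le
      · intro x hx
        simp only [SimpleGraph.mem_neighborFinset] at hx
        have hxmem : x ∈ ({v, c, p, q, s, t} : Finset V) := huniv ▸ Finset.mem_univ x
        simp only [Finset.mem_insert, Finset.mem_singleton] at hxmem ⊢
        rcases hxmem with rfl | rfl | rfl | rfl | rfl | rfl
        · exact absurd hx hnsv
        · exact absurd hx hnsc
        · tauto
        · tauto
        · exact absurd rfl hx.ne
        · tauto
      · rw [show (G.neighborFinset s).card = 3 from hdeg s,
          Finset.card_insert_of_notMem (by simp [hpq, Ne.symm htp]),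
          Finset.card_insert_of_notMem (by simp [Ne.symm htq]), Finset.card_singleton]
    have hNt : G.neighborFinset t = {p, q, s} := by
      apply Finset.eq_of_subset_of_card_le
      · intro x hx
        simp only [SimpleGraph.mem_neighborFinset] at hx
        have hxmem : x ∈ ({v, c, p, q, s, t} : Finset V) := huniv ▸ Finset.mem_univ x
        simp only [Finset.mem_insert, Finset.mem_singleton] at hxmem ⊢
        rcases hxmem with rfl | rfl | rfl | rfl | rfl | rfl
        · exact absurd hx hntv
        · exact absurd hx hntc
        · tauto
        · tauto
        · tauto
        · exact absurd rfl hx.ne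
      · rw [show (G.neighborFinset t).card = 3 from hdeg t,
          Finset.card_insert_of_notMem (by simp [hpq, Ne.symm hsp]),
          Finset.card_insert_of_notMem (by simp [Ne.symm hsq]), Finset.card_singleton]
    have hsp' : G.Adj s p := by
      have : p ∈ G.neighborFinset s := by rw [hNs]; simp
      simpa [SimpleGraph.mem_neighborFinset] using this
    have htp' : G.Adj t p := by
      have : p ∈ G.neighborFinset t := by rw [hNt]; simp
      simpa [SimpleGraph.mem_neighborFinset] using this
    -- N(p) contains v, c, s, t : four distinct vertices
    have hsub : ({v, c, s, t} : Finset V) ⊆ G.neighborFinset p := by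
      intro x hx
      simp only [Finset.mem_insert, Finset.mem_singleton] at hx
      rcases hx with rfl | rfl | rfl | rfl <;>
        simp [SimpleGraph.mem_neighborFinset, avp.symm, acp.symm, hsp'.symm, htp'.symm]
    have hc4 : ({v, c, s, t} : Finset V).card = 4 := by
      rw [Finset.card_insert_of_notMem (by simp [hvc, Ne.symm hsv, Ne.symm htv]),
        Finset.card_insert_of_notMem (by simp [Ne.symm hsc, Ne.symm htc]),
        Finset.card_insert_of_notMem (by simp [hst]), Finset.card_singleton]
    have := Finset.card_le_card hsub
    rw [hc4, show (G.neighborFinset p).card = 3 from hdeg p] at this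
    omega

lemma tri_unique (hcard : Fintype.card V = 6) (hdeg : ∀ v : V, G.degree v = 3)
    (hK4 : ∀ s : Finset V, G.IsClique (s : Set V) → s.card ≠ 4) (v : V) :
    ((Finset.univ.filter fun s : Finset V => G.IsClique (s : Set V) ∧ s.card = 3).filter
      (fun T => v ∈ T)).card ≤ 1 := by
  classical
  rw [Finset.card_le_one]
  intro T1 h1 T2 h2
  simp only [Finset.mem_filter, Finset.mem_univ, true_and] at h1 h2
  obtain ⟨⟨hcl1, hc1⟩, hv1⟩ := h1
  obtain ⟨⟨hcl2, hc2⟩, hv2⟩ := h2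
  by_contra hne
  have he1 : (T1.erase v).card = 2 := by rw [Finset.card_erase_of_mem hv1, hc1]
  have he2 : (T2.erase v).card = 2 := by rw [Finset.card_erase_of_mem hv2, hc2]
  obtain ⟨x, y, hxy, hexy⟩ := Finset.card_eq_two.mp he1
  obtain ⟨z, w, hzw, hezw⟩ := Finset.card_eq_two.mp he2
  have hx1 : x ∈ T1.erase v := by rw [hexy]; simp
  have hy1 : y ∈ T1.erase v := by rw [hexy]; simp
  have hz2 : z ∈ T2.erase v := by rw [hezw]; simp
  have hw2 : w ∈ T2.erase v := by rw [hezw]; simp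
  obtain ⟨hxv, hxT⟩ := Finset.mem_erase.mp hx1
  obtain ⟨hyv, hyT⟩ := Finset.mem_erase.mp hy1
  obtain ⟨hzv, hzT⟩ := Finset.mem_erase.mp hz2
  obtain ⟨hwv, hwT⟩ := Finset.mem_erase.mp hw2
  have hT1eq : T1 = insert v ({x, y} : Finset V) := by
    rw [← hexy, Finset.insert_erase hv1]
  have hT2eq : T2 = insert v ({z, w} : Finset V) := by
    rw [← hezw, Finset.insert_erase hv2]
  have hpairne : ({x, y} : Finset V) ≠ {z, w} := by
    intro h
    exact hne (by rw [hT1eq, hT2eq, h])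
  have avx : G.Adj v x := hcl1 (Finset.mem_coe.mpr hv1) (Finset.mem_coe.mpr hxT) (Ne.symm hxv)
  have avy : G.Adj v y := hcl1 (Finset.mem_coe.mpr hv1) (Finset.mem_coe.mpr hyT) (Ne.symm hyv)
  have avz : G.Adj v z := hcl2 (Finset.mem_coe.mpr hv2) (Finset.mem_coe.mpr hzT) (Ne.symm hzv)
  have avw : G.Adj v w := hcl2 (Finset.mem_coe.mpr hv2) (Finset.mem_coe.mpr hwT) (Ne.symm hwv)
  have axy : G.Adj x y := hcl1 (Finset.mem_coe.mpr hxT) (Finset.mem_coe.mpr hyT) hxy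
  have azw : G.Adj z w := hcl2 (Finset.mem_coe.mpr hzT) (Finset.mem_coe.mpr hwT) hzw
  by_cases hxz : x = z
  · subst hxz
    have hyw : y ≠ w := by
      intro h
      exact hpairne (by rw [h])
    exact diamond hcard hdeg hK4 v x y w hxy hzw hyw avx avy avw axy azw
  · by_cases hxw : x = w
    · subst hxw
      have hyz : y ≠ z := by
        intro h
        exact hpairne (by rw [h, Finset.pair_comm])
      exact diamond hcard hdeg hK4 v x y z hxy (Ne.symm hzw) hyz avx avy avz axy azw.symm
    · by_cases hyz : y = z
      · subst hyz
        have hxw' : x ≠ w := hxw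
        exact diamond hcard hdeg hK4 v y x w (Ne.symm hxy) hzw hxw' avy avx avw axy.symm azw
      · by_cases hyw : y = w
        · subst hyw
          exact diamond hcard hdeg hK4 v y x z (Ne.symm hxy) (Ne.symm hzw) hxz avy avx avz
            axy.symm azw.symm
        · -- all four distinct: N(v) too big
          have hsub : ({x, y, z, w} : Finset V) ⊆ G.neighborFinset v := by
            intro u hu
            simp only [Finset.mem_insert, Finset.mem_singleton] at hu
            rcases hu with rfl | rfl | rfl | rfl <;>
              simp [SimpleGraph.mem_neighborFinset, avx, avy, avz, avw]
          have hc4 : ({x, y, z, w} : Finset V).card = 4 := by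
            rw [Finset.card_insert_of_notMem (by simp [hxy, hxz, hxw]),
              Finset.card_insert_of_notMem (by simp [hyz, hyw]),
              Finset.card_insert_of_notMem (by simp [hzw]), Finset.card_singleton]
          have := Finset.card_le_card hsub
          rw [hc4, show (G.neighborFinset v).card = 3 from hdeg v] at this
          omega

lemma no_three_triangles (hcard : Fintype.card V = 6) (hdeg : ∀ v : V, G.degree v = 3)
    (hK4 : ∀ s : Finset V, G.IsClique (s : Set V) → s.card ≠ 4) :
    (Finset.univ.filter fun s : Finset V => G.IsClique (s : Set V) ∧ s.card = 3).card ≠ 3 := by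
  classical
  intro h3
  set 𝒯 := Finset.univ.filter fun s : Finset V => G.IsClique (s : Set V) ∧ s.card = 3 with h𝒯
  have h9 : ∑ T ∈ 𝒯, T.card = 9 := by
    rw [Finset.sum_congr rfl (g := fun _ => 3) fun T hT => by
      simp only [h𝒯, Finset.mem_filter] at hT; exact hT.2.2]
    rw [Finset.sum_const, h3, smul_eq_mul]
  have hswap : ∑ T ∈ 𝒯, T.card
      = ∑ u ∈ Finset.univ, (𝒯.filter (fun T => u ∈ T)).card := by
    calc ∑ T ∈ 𝒯, T.card = ∑ T ∈ 𝒯, ∑ u ∈ Finset.univ, if u ∈ T then 1 else 0 := by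
          refine Finset.sum_congr rfl fun T _ => ?_
          rw [← Finset.card_filter]
          congr 1
          ext u
          simp
      _ = ∑ u ∈ Finset.univ, ∑ T ∈ 𝒯, if u ∈ T then 1 else 0 := Finset.sum_comm
      _ = ∑ u ∈ Finset.univ, (𝒯.filter (fun T => u ∈ T)).card := by
          exact Finset.sum_congr rfl fun u _ => (Finset.card_filter _ _).symm
  have hle : ∑ u ∈ Finset.univ, (𝒯.filter (fun T => u ∈ T)).card
      ≤ ∑ _u ∈ (Finset.univ : Finset V), 1 :=
    Finset.sum_le_sum fun u _ => tri_unique hcard hdeg hK4 u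
  rw [Finset.sum_const, smul_eq_mul, mul_one, Finset.card_univ, hcard] at hle
  rw [← hswap, h9] at hle
  omega

end Cor53graph

namespace Cor53k
open Classical Finset Paper
variable {a r b : ℕ}

/-- the part of a vertex -/
def kpart : (Fin a × Fin (r + 1)) ⊕ Fin b → Fin a ⊕ Unit
  | Sum.inl (i, _) => Sum.inl i
  | Sum.inr _ => Sum.inr ()

lemma kUnion_adj (x y : (Fin a × Fin (r + 1)) ⊕ Fin b) :
    (kUnion a r b).Adj x y ↔ x ≠ y ∧ kpart x = kpart y := by
  unfold kUnion
  rw [SimpleGraph.fromRel_adj]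
  constructor
  · rintro ⟨hne, h | h⟩ <;>
    · refine ⟨hne, ?_⟩
      rcases x with ⟨i, s⟩ | u <;> rcases y with ⟨j, t⟩ | v <;>
        simp_all [kpart]
  · rintro ⟨hne, h⟩
    refine ⟨hne, Or.inl ?_⟩
    rcases x with ⟨i, s⟩ | u <;> rcases y with ⟨j, t⟩ | v <;> simp_all [kpart]

lemma kUnion_clique_iff (s : Finset ((Fin a × Fin (r + 1)) ⊕ Fin b)) :
    (kUnion a r b).IsClique (s : Set _) ↔
      ∀ x ∈ s, ∀ y ∈ s, kpart x = kpart y := by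
  constructor
  · intro h x hx y hy
    by_cases hxy : x = y
    · rw [hxy]
    · exact ((kUnion_adj x y).mp (h hx hy hxy)).2
  · intro h x hx y hy hxy
    exact (kUnion_adj x y).mpr ⟨hxy, h x hx y hy⟩

noncomputable def kfiber (p : Fin a ⊕ Unit) : Finset ((Fin a × Fin (r + 1)) ⊕ Fin b) :=
  Finset.univ.filter fun x => kpart x = p

lemma kfiber_card_inl (i : Fin a) : (kfiber (b := b) (r := r) (Sum.inl i)).card = r + 1 := by
  rw [show kfiber (b := b) (r := r) (Sum.inl i)
      = Finset.univ.image (fun t : Fin (r+1) => (Sum.inl (i, t) : (Fin a × Fin (r+1)) ⊕ Fin b))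
      from ?_]
  · rw [Finset.card_image_of_injective _ (fun u v h => by simpa using h)]
    simp
  · ext x
    simp only [kfiber, mem_filter, mem_univ, true_and, mem_image]
    rcases x with ⟨j, t⟩ | u
    · simp only [kpart, Sum.inl.injEq]
      constructor
      · rintro rfl; exact ⟨t, rfl⟩
      · rintro ⟨w, hw⟩
        exact (Prod.mk.injEq _ _ _ _ ▸ hw).1.symm
    · simp [kpart]

lemma kfiber_card_inr (u : Unit) : (kfiber (a := a) (b := b) (r := r) (Sum.inr u)).card = b := by
  rw [show kfiber (a := a) (b := b) (r := r) (Sum.inr u)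
      = Finset.univ.image (fun u : Fin b => (Sum.inr u : (Fin a × Fin (r+1)) ⊕ Fin b))
      from ?_]
  · rw [Finset.card_image_of_injective _ (fun u v h => by simpa using h)]
    simp
  · ext x
    simp only [kfiber, mem_filter, mem_univ, true_and, mem_image]
    rcases x with ⟨j, t⟩ | u
    · simp [kpart]
    · simp [kpart]

lemma kUnion_count : cliqueCount (kUnion a r b) = a * (2 ^ (r + 1) - 1) + 2 ^ b := by
  have hset : cliqueCount (kUnion a r b)
      = (insert ∅ (Finset.univ.biUnion fun p : Fin a ⊕ Unit =>
          ((kfiber (a := a) (r := r) (b := b) p).powerset.erase ∅))).card := by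
    unfold cliqueCount
    congr 1
    ext s
    simp only [mem_filter, mem_univ, true_and, mem_insert, mem_biUnion, mem_erase,
      mem_powerset, kUnion_clique_iff]
    constructor
    · intro h
      rcases Finset.eq_empty_or_nonempty s with rfl | ⟨x, hx⟩
      · exact Or.inl rfl
      · refine Or.inr ⟨kpart x, fun hs => by simp [hs] at hx, fun y hy => ?_⟩
        simp only [kfiber, mem_filter, mem_univ, true_and]
        exact h y hy x hx
    · rintro (rfl | ⟨p, hne, hsub⟩)
      · simp
      · intro x hx y hy
        have h1 := hsub hx; have h2 := hsub hy
        simp only [kfiber, mem_filter, mem_univ, true_and] at h1 h2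
        rw [h1, h2]
  rw [hset, Finset.card_insert_of_notMem (by simp)]
  rw [Finset.card_biUnion]
  · have hterm : ∀ p : Fin a ⊕ Unit,
        ((kfiber (a := a) (b := b) (r := r) p).powerset.erase ∅).card
          = 2 ^ (kfiber (a := a) (b := b) (r := r) p).card - 1 := by
      intro p
      rw [Finset.card_erase_of_mem (by simp), Finset.card_powerset]
    rw [Finset.sum_congr rfl fun p _ => hterm p, Fintype.sum_sum_type]
    simp only [kfiber_card_inl, kfiber_card_inr, Finset.sum_const, Finset.card_univ,
      Fintype.card_fin, Fintype.card_unit, smul_eq_mul, one_mul]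
    have h1 : 1 ≤ 2 ^ b := Nat.one_le_two_pow
    rw [add_assoc, Nat.sub_add_cancel h1]
  · intro p _ q _ hpq
    simp only [Finset.disjoint_left, mem_erase, mem_powerset]
    rintro s ⟨hne, hsp⟩ ⟨_, hsq⟩
    obtain ⟨x, hx⟩ := Finset.nonempty_iff_ne_empty.mpr hne
    have h1 := hsp hx; have h2 := hsq hx
    simp only [kfiber, mem_filter, mem_univ, true_and] at h1 h2
    exact hpq (h1 ▸ h2 ▸ rfl)

end Cor53k

open Classical Finset


/-- **Corollary 5.3.** Let `r ≥ 3` and let `G` be a graph on `n` vertices with `Δ(G) ≤ r`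
satisfying the strong inequalities `t k_t(G) ≤ (r - t + 1) k_{t-1}(G)` for all `t ≥ 3`.
If `n = a(r+1) + b` with `a ≥ 1` and `0 ≤ b ≤ r`, then
`k(G) < a(2^{r+1} - 1) + 2^b = k(aK_{r+1} ∪ K_b)`. -/
theorem stmt17 {V : Type*} [Fintype V] (n r a b : ℕ) (hr : 3 ≤ r) (ha : 1 ≤ a) (hb : b ≤ r)
    (hn : n = a * (r + 1) + b) (hcard : Fintype.card V = n) (G : SimpleGraph V)
    (hdeg : G.maxDegree ≤ r)
    (hstrong : ∀ t : ℕ, 3 ≤ t →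
      (t : ℤ) * cliqueCountSize G t ≤ ((r : ℤ) - t + 1) * cliqueCountSize G (t - 1)) :
    cliqueCount G < a * (2 ^ (r + 1) - 1) + 2 ^ b ∧
      cliqueCount (kUnion a r b) = a * (2 ^ (r + 1) - 1) + 2 ^ b := by
  refine ⟨?_, Cor53k.kUnion_count⟩
  have hnr : r + 1 ≤ n := by
    have h1 : r + 1 ≤ a * (r + 1) := Nat.le_mul_of_pos_left _ ha
    omega
  have hdeg' : ∀ v : V, G.degree v ≤ r := fun v => (G.degree_le_maxDegree v).trans hdeg
  have h2 : 2 * cliqueCountSize G 2 ≤ n * r := by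
    have hds := Cor53.deg_sum_eq G
    have hle : ∑ v, G.degree v ≤ ∑ _v : V, r := Finset.sum_le_sum fun v _ => hdeg' v
    rw [Finset.sum_const, smul_eq_mul, Finset.card_univ, hcard] at hle
    omega
  have hvan : ∀ {t : ℕ}, r + 1 ≤ t → cliqueCountSize G t = 0 := fun ht =>
    Cor53.ccs_vanish hstrong hr ht
  have hch := Cor53.ccs_chain (n := n) hstrong hr h2
  have hmb := Cor53.main_bound hr hcard hnr (fun {t} ht => hvan ht) hch
  by_cases hex : r = 3 ∧ a = 1 ∧ b = 2
  · obtain ⟨rfl, rfl, rfl⟩ := hex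
    have hn6 : n = 6 := by omega
    subst hn6
    have h0 := Cor53.ccs_zero G
    have h1 := Cor53.ccs_one G
    rw [hcard] at h1
    have h4 : cliqueCountSize G 4 = 0 := hvan (by norm_num)
    have h5 : cliqueCountSize G 5 = 0 := hvan (by norm_num)
    have h6 : cliqueCountSize G 6 = 0 := hvan (by norm_num)
    have hk : cliqueCount G = 7 + cliqueCountSize G 2 + cliqueCountSize G 3 := by
      rw [Cor53.cc_sum G, hcard]
      rw [Finset.sum_range_succ, Finset.sum_range_succ, Finset.sum_range_succ,
        Finset.sum_range_succ, Finset.sum_range_succ, Finset.sum_range_succ,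
        Finset.sum_range_one, h0, h1, h4, h5, h6]
      omega
    have h3' : 3 * cliqueCountSize G 3 ≤ cliqueCountSize G 2 := by
      have := hstrong 3 le_rfl
      norm_num at this
      exact_mod_cast this
    have h2' : 2 * cliqueCountSize G 2 ≤ 18 := by
      have := h2
      norm_num at this
      omega
    have hK4 : ∀ s : Finset V, G.IsClique (s : Set V) → s.card ≠ 4 := by
      intro s hs hc4
      have hz : cliqueCountSize G 4 = 0 := h4
      rw [cliqueCountSize, Finset.card_eq_zero] at hz
      have : s ∈ (Finset.univ.filter fun s : Finset V =>
          G.IsClique (s : Set V) ∧ s.card = 4) :=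
        Finset.mem_filter.mpr ⟨Finset.mem_univ s, hs, hc4⟩
      rw [hz] at this
      exact absurd this (Finset.notMem_empty s)
    have hne3 : cliqueCountSize G 2 = 9 → cliqueCountSize G 3 ≠ 3 := by
      intro hk2 hk3
      have hdeg3 : ∀ v : V, G.degree v = 3 := by
        by_contra hcon
        push_neg at hcon
        obtain ⟨v, hv⟩ := hcon
        have hlt : G.degree v < 3 := lt_of_le_of_ne (hdeg' v) hv
        have hstrict : ∑ u, G.degree u < ∑ _u : V, 3 :=
          Finset.sum_lt_sum (fun i _ => hdeg' i) ⟨v, Finset.mem_univ v, hlt⟩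
        rw [Cor53.deg_sum_eq G, hk2, Finset.sum_const, smul_eq_mul,
          Finset.card_univ, hcard] at hstrict
        omega
      have hfilt : (Finset.univ.filter fun s : Finset V =>
          G.IsClique (s : Set V) ∧ s.card = 3).card = 3 := hk3
      exact Cor53graph.no_three_triangles hcard hdeg3 hK4 hfilt
    by_cases hk29 : cliqueCountSize G 2 = 9
    · have := hne3 hk29
      norm_num
      omega
    · norm_num
      omega
  · have hnum := numeric r a b hr ha hb hex
    have hncast : (n : ℤ) = (a : ℤ) * ((r : ℤ) + 1) + (b : ℤ) := by
      rw [hn]; push_cast; ring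
    have h2pow : (1 : ℕ) ≤ 2 ^ (r + 1) := Nat.one_le_two_pow
    have hcastQ : ((a * (2 ^ (r + 1) - 1) + 2 ^ b : ℕ) : ℤ)
        = (a : ℤ) * (2 ^ (r + 1) - 1) + 2 ^ b := by
      push_cast [h2pow]
      ring
    have hfin : ((r : ℤ) - 1) * cliqueCount G
        < ((r : ℤ) - 1) * ((a * (2 ^ (r + 1) - 1) + 2 ^ b : ℕ) : ℤ) := by
      calc ((r : ℤ) - 1) * cliqueCount G
          ≤ ((r : ℤ) - 1) + (n : ℤ) * (2 ^ r - 2) := hmb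
        _ < ((r : ℤ) - 1) * ((a : ℤ) * (2 ^ (r + 1) - 1) + 2 ^ b) := by
            rw [hncast]; linarith
        _ = ((r : ℤ) - 1) * ((a * (2 ^ (r + 1) - 1) + 2 ^ b : ℕ) : ℤ) := by rw [hcastQ]
    have hrpos : (0 : ℤ) < (r : ℤ) - 1 := by
      have : (3 : ℤ) ≤ (r : ℤ) := by exact_mod_cast hr
      linarith
    exact_mod_cast lt_of_mul_lt_mul_left hfin (le_of_lt hrpos)
end
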